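/- If F₀ : ℝ → [0,1] is a cumulative distribution function (right-continuous, increasing, with limits 0 at −∞ and 1 at +∞), then for any positive reals a₁,…,a_q, the function x ↦ g_{a₁,…,a_q}(F₀(x)) is also a cumulative distribution function. -/

import Mathlib

noncomputable def g (q : ℕ) (a : ℕ → ℝ) (u : ℝ) : ℝ :=
  (q : ℝ) ^ q * u * (∏ i ∈ Finset.Icc 2 q, (a i + u - a i * u)) /
    ((∑ i ∈ Finset.Icc 1 q, a i) - ((∑ i ∈ Finset.Icc 1 q, a i) - q) * u) ^ q

/-- A cumulative distribution function. -/
def IsCDF (F : ℝ → ℝ) : Prop :=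
  Monotone F ∧ (∀ x, ContinuousWithinAt F (Set.Ici x) x) ∧
    Filter.Tendsto F Filter.atBot (nhds 0) ∧ Filter.Tendsto F Filter.atTop (nhds 1)


private lemma b_pos {a u : ℝ} (ha : 0 < a) (hu0 : 0 ≤ u) (hu1 : u ≤ 1) :
    0 < a + u - a * u := by
  nlinarith [mul_nonneg ha.le (sub_nonneg.2 hu1), mul_nonneg ha.le hu0]

private lemma D_eq (q : ℕ) (a : ℕ → ℝ) (u : ℝ) :
    (∑ i ∈ Finset.Icc 1 q, a i) - ((∑ i ∈ Finset.Icc 1 q, a i) - q) * u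
      = ∑ i ∈ Finset.Icc 1 q, (a i + u - a i * u) := by
  have hcard : (Finset.Icc 1 q).card = q := by rw [Nat.card_Icc]; omega
  rw [Finset.sum_sub_distrib, Finset.sum_add_distrib, Finset.sum_const, hcard,
    ← Finset.sum_mul, nsmul_eq_mul]
  ring

private lemma D_pos (q : ℕ) (hq : 1 ≤ q) (a : ℕ → ℝ)
    (ha : ∀ i ∈ Finset.Icc 1 q, 0 < a i) {u : ℝ} (hu0 : 0 ≤ u) (hu1 : u ≤ 1) :
    0 < (∑ i ∈ Finset.Icc 1 q, a i) - ((∑ i ∈ Finset.Icc 1 q, a i) - q) * u := by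
  rw [D_eq]
  apply Finset.sum_pos (fun i hi => b_pos (ha i hi) hu0 hu1)
  exact ⟨1, by simp [hq]⟩

private lemma deriv_nonneg (q : ℕ) (hq : 1 ≤ q) (a : ℕ → ℝ)
    (ha : ∀ i ∈ Finset.Icc 1 q, 0 < a i) {u : ℝ} (hu0 : 0 < u) (hu1 : u < 1) :
    0 ≤ u⁻¹ + (∑ i ∈ Finset.Icc 2 q, (1 - a i) / (a i + u - a i * u))
      - q * (((q : ℝ) - (∑ i ∈ Finset.Icc 1 q, a i)) /
        ((∑ i ∈ Finset.Icc 1 q, a i) - ((∑ i ∈ Finset.Icc 1 q, a i) - q) * u)) := by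
  set S := ∑ i ∈ Finset.Icc 1 q, a i with hS
  set D := S - (S - q) * u with hD
  have hDpos : 0 < D := D_pos q hq a ha hu0.le hu1.le
  have hb : ∀ i ∈ Finset.Icc 1 q, 0 < a i + u - a i * u :=
    fun i hi => b_pos (ha i hi) hu0.le hu1.le
  set T := ∑ i ∈ Finset.Icc 1 q, (a i + u - a i * u)⁻¹ with hT
  have hcard : (Finset.Icc 1 q).card = q := by rw [Nat.card_Icc]; omega
  -- Cauchy-Schwarz (AM-HM)
  have key1 : (q : ℝ) ^ 2 ≤ D * T := by
    have := Finset.sum_sq_le_sum_mul_sum_of_sq_eq_mul (Finset.Icc 1 q)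
      (r := fun _ => (1 : ℝ)) (f := fun i => a i + u - a i * u)
      (g := fun i => (a i + u - a i * u)⁻¹)
      (fun i hi => (hb i hi).le) (fun i hi => (inv_pos.2 (hb i hi)).le)
      (fun i hi => by rw [one_pow, mul_inv_cancel₀ (hb i hi).ne'])
    calc (q:ℝ)^2 = (∑ _i ∈ Finset.Icc 1 q, (1:ℝ))^2 := by simp [hcard]
      _ ≤ _ := this
      _ = D * T := by rw [hD, hT, D_eq]
  have hu1' : (0:ℝ) < 1 - u := by linarith
  have hsum : ∑ i ∈ Finset.Icc 1 q, (1 - a i) / (a i + u - a i * u)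
      = (1 - u)⁻¹ * (T - q) := by
    have step : ∀ i ∈ Finset.Icc 1 q, (1 - a i) / (a i + u - a i * u)
        = (1 - u)⁻¹ * ((a i + u - a i * u)⁻¹ - 1) := by
      intro i hi
      have h1 := (hb i hi).ne'
      field_simp
      ring
    rw [Finset.sum_congr rfl step, ← Finset.mul_sum, Finset.sum_sub_distrib,
      Finset.sum_const, hcard, hT]
    simp
  have h2 : (q : ℝ) * (((q : ℝ) - S) / D) ≤ ∑ i ∈ Finset.Icc 1 q, (1 - a i) / (a i + u - a i * u) := by
    rw [hsum]
    have hqS : (q : ℝ) - S = ((q : ℝ) - D) * (1 - u)⁻¹ := by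
      rw [hD]; field_simp; ring
    rw [hqS, show (q:ℝ) * (((q:ℝ) - D) * (1 - u)⁻¹ / D) = (1 - u)⁻¹ * ((q:ℝ) * ((q:ℝ) - D) / D) by ring]
    apply mul_le_mul_of_nonneg_left _ (inv_nonneg.2 hu1'.le)
    rw [div_le_iff₀ hDpos]
    nlinarith [key1]
  have h1mem : 1 ∈ Finset.Icc 1 q := by simp [hq]
  have hb1 : 0 < a 1 + u - a 1 * u := hb 1 h1mem
  have h1 : (1 - a 1) / (a 1 + u - a 1 * u) ≤ u⁻¹ := by
    rw [← one_div, div_le_div_iff₀ hb1 hu0]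
    nlinarith [ha 1 h1mem]
  have hins : Finset.Icc 1 q = insert 1 (Finset.Icc 2 q) := by
    ext i; simp only [Finset.mem_Icc, Finset.mem_insert]; omega
  have hnotin : 1 ∉ Finset.Icc 2 q := by simp
  have hsplit : ∑ i ∈ Finset.Icc 1 q, (1 - a i) / (a i + u - a i * u)
      = (1 - a 1) / (a 1 + u - a 1 * u)
        + ∑ i ∈ Finset.Icc 2 q, (1 - a i) / (a i + u - a i * u) := by
    rw [hins, Finset.sum_insert hnotin]
  linarith [h2, h1]

private lemma mem12 {q i : ℕ} (hi : i ∈ Finset.Icc 2 q) : i ∈ Finset.Icc 1 q := by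
  simp only [Finset.mem_Icc] at hi ⊢; omega

private lemma h_mono (q : ℕ) (hq : 1 ≤ q) (a : ℕ → ℝ)
    (ha : ∀ i ∈ Finset.Icc 1 q, 0 < a i) :
    MonotoneOn (fun u => Real.log u + (∑ i ∈ Finset.Icc 2 q, Real.log (a i + u - a i * u))
      - q * Real.log ((∑ i ∈ Finset.Icc 1 q, a i) - ((∑ i ∈ Finset.Icc 1 q, a i) - q) * u))
      (Set.Ioc 0 1) := by
  set S := ∑ i ∈ Finset.Icc 1 q, a i with hS
  have hderiv : ∀ u ∈ Set.Ioo (0:ℝ) 1,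
      HasDerivAt (fun u => Real.log u + (∑ i ∈ Finset.Icc 2 q, Real.log (a i + u - a i * u))
        - q * Real.log (S - (S - q) * u))
        (u⁻¹ + (∑ i ∈ Finset.Icc 2 q, (1 - a i) / (a i + u - a i * u))
          - q * (((q:ℝ) - S) / (S - (S - q) * u))) u := by
    intro u hu
    have hu0 : 0 < u := hu.1
    have hDne : (S - (S - q) * u) ≠ 0 := (D_pos q hq a ha hu0.le hu.2.le).ne'
    have l1 : HasDerivAt Real.log u⁻¹ u := Real.hasDerivAt_log hu0.ne'
    have l2 : ∀ i ∈ Finset.Icc 2 q, HasDerivAt (fun u => Real.log (a i + u - a i * u))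
        ((1 - a i) / (a i + u - a i * u)) u := by
      intro i hi
      have hbi : a i + u - a i * u ≠ 0 := (b_pos (ha i (mem12 hi)) hu0.le hu.2.le).ne'
      have hlin : HasDerivAt (fun u : ℝ => a i + u - a i * u) (1 - a i) u := by
        exact (((hasDerivAt_id' u).const_add (a i)).sub ((hasDerivAt_id' u).const_mul (a i))).congr_deriv (by ring)
      exact hlin.log hbi
    have l3 : HasDerivAt (fun u : ℝ => S - (S - q) * u) (-(S - (q:ℝ))) u := by
      exact ((hasDerivAt_const u S).sub ((hasDerivAt_id' u).const_mul (S - (q:ℝ)))).congr_deriv (by ring)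
    have l4 := (l3.log hDne).const_mul (q : ℝ)
    have := (l1.fun_add (HasDerivAt.fun_sum l2)).fun_sub l4
    exact this.congr_deriv (by ring)
  apply monotoneOn_of_deriv_nonneg (convex_Ioc 0 1)
  · -- continuity
    apply ContinuousOn.sub
    apply ContinuousOn.add
    · exact Real.continuousOn_log.mono (fun u hu => by simpa using hu.1.ne')
    · apply continuousOn_finset_sum
      intro i hi
      apply ContinuousOn.log (by fun_prop)
      exact fun u hu => (b_pos (ha i (mem12 hi)) hu.1.le hu.2).ne'
    · exact continuousOn_const.mul (ContinuousOn.log (by fun_prop)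
        (fun u hu => (D_pos q hq a ha hu.1.le hu.2).ne'))
  · rw [interior_Ioc]
    exact fun u hu => ((hderiv u hu).differentiableAt).differentiableWithinAt
  · rw [interior_Ioc]
    intro u hu
    rw [(hderiv u hu).deriv]
    exact deriv_nonneg q hq a ha hu.1 hu.2

private lemma g_eq_exp (q : ℕ) (hq : 1 ≤ q) (a : ℕ → ℝ)
    (ha : ∀ i ∈ Finset.Icc 1 q, 0 < a i) {u : ℝ} (hu0 : 0 < u) (hu1 : u ≤ 1) :
    g q a u = (q:ℝ)^q * Real.exp (Real.log u
      + (∑ i ∈ Finset.Icc 2 q, Real.log (a i + u - a i * u))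
      - q * Real.log ((∑ i ∈ Finset.Icc 1 q, a i) - ((∑ i ∈ Finset.Icc 1 q, a i) - q) * u)) := by
  have hD := D_pos q hq a ha hu0.le hu1
  rw [Real.exp_sub, Real.exp_add, Real.exp_sum, Real.exp_log hu0, Real.exp_nat_mul,
    Real.exp_log hD,
    Finset.prod_congr rfl (fun i hi => Real.exp_log (b_pos (ha i (mem12 hi)) hu0.le hu1))]
  unfold g
  ring

private lemma g_mono (q : ℕ) (hq : 1 ≤ q) (a : ℕ → ℝ)
    (ha : ∀ i ∈ Finset.Icc 1 q, 0 < a i) :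
    MonotoneOn (g q a) (Set.Icc 0 1) := by
  intro u hu v hv huv
  rcases eq_or_lt_of_le hu.1 with h0 | h0
  · have hz : g q a u = 0 := by rw [← h0]; simp [g]
    rw [hz]
    unfold g
    apply div_nonneg
    · apply mul_nonneg (mul_nonneg (by positivity) hv.1)
      exact Finset.prod_nonneg fun i hi => (b_pos (ha i (mem12 hi)) hv.1 hv.2).le
    · exact (pow_pos (D_pos q hq a ha hv.1 hv.2) q).le
  · rw [g_eq_exp q hq a ha h0 hu.2, g_eq_exp q hq a ha (h0.trans_le huv) hv.2]
    apply mul_le_mul_of_nonneg_left _ (by positivity)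
    exact Real.exp_le_exp.2 (h_mono q hq a ha ⟨h0, hu.2⟩ ⟨h0.trans_le huv, hv.2⟩ huv)

private lemma g_one (q : ℕ) (hq : 1 ≤ q) (a : ℕ → ℝ) : g q a 1 = 1 := by
  have hq0 : (0:ℝ) < (q:ℝ) := by exact_mod_cast hq
  unfold g
  rw [Finset.prod_congr rfl (fun i _ => by ring : ∀ i ∈ Finset.Icc 2 q,
    a i + 1 - a i * 1 = 1), Finset.prod_const_one,
    show (∑ i ∈ Finset.Icc 1 q, a i) - ((∑ i ∈ Finset.Icc 1 q, a i) - q) * 1 = (q:ℝ) by ring]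
  field_simp

theorem stmt_5 (q : ℕ) (hq : 1 ≤ q) (a : ℕ → ℝ)
    (ha : ∀ i ∈ Finset.Icc 1 q, 0 < a i)
    (F₀ : ℝ → ℝ) (hF₀ : IsCDF F₀) (hrange : ∀ x, F₀ x ∈ Set.Icc (0:ℝ) 1) :
    IsCDF (fun x => g q a (F₀ x)) := by
  have hcont : ∀ t ∈ Set.Icc (0:ℝ) 1, ContinuousAt (g q a) t := by
    intro t ht
    unfold g
    apply ContinuousAt.div
    · apply Continuous.continuousAt
      exact (continuous_const.mul continuous_id).mul
        (continuous_finset_prod _ fun i _ => by fun_prop)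
    · fun_prop
    · exact pow_ne_zero q (D_pos q hq a ha ht.1 ht.2).ne'
  refine ⟨?_, ?_, ?_, ?_⟩
  · exact fun x y hxy => g_mono q hq a ha (hrange x) (hrange y) (hF₀.1 hxy)
  · exact fun x => (hcont (F₀ x) (hrange x)).comp_continuousWithinAt (hF₀.2.1 x)
  · have h0 : g q a 0 = 0 := by simp [g]
    have := ((hcont 0 ⟨le_refl 0, zero_le_one⟩).tendsto).comp hF₀.2.2.1
    rw [h0] at this
    exact this
  · have := ((hcont 1 ⟨zero_le_one, le_refl 1⟩).tendsto).comp hF₀.2.2.2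
    rw [g_one q hq a] at this
    exact this
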